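/- Let G = (V, w) be an n-vertex weighted graph. Then λ(G)-cut-rank(G) ≤ mincut-cert(G) ≤ λ(G)-cut-rank(G) + 1. -/

import Mathlib

open Finset Matrix


open Finset Matrix

/-- The set of edge slots: 2-element subsets of the vertex set `Fin n`. -/
abbrev EdgeSlot (n : ℕ) := {e : Finset (Fin n) // e.card = 2}

/-- Weight of the cut with shore `S`: sum of weights of edge slots with exactly
one endpoint in `S`. -/
noncomputable def cutWeight (n : ℕ) (w : EdgeSlot n → ℝ) (S : Finset (Fin n)) : ℝ :=
  ∑ e : EdgeSlot n, if (e.1 ∩ S).card = 1 then w e else 0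

/-- `λ(G)`: the minimum cut weight over all shores `∅ ≠ S ⊊ V`. -/
noncomputable def minCutVal (n : ℕ) (w : EdgeSlot n → ℝ) : ℝ :=
  sInf {x : ℝ | ∃ S : Finset (Fin n), S.Nonempty ∧ S ≠ Finset.univ ∧ cutWeight n w S = x}

/-- The at-least-τ linear-query certificate complexity: the least `k` such that some
`k`-row query matrix `A` certifies that every nonnegative `w'` consistent with the
answers on `w` has minimum cut value at least `τ`. -/
noncomputable def atLeastCert (n : ℕ) (τ : ℝ) (w : EdgeSlot n → ℝ) : ℕ :=
  sInf {k : ℕ | ∃ A : Matrix (Fin k) (EdgeSlot n) ℝ,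
    ∀ w' : EdgeSlot n → ℝ, (∀ e, 0 ≤ w' e) → A.mulVec w = A.mulVec w' →
      τ ≤ minCutVal n w'}

/-- The minimum-cut linear-query certificate complexity. -/
noncomputable def mincutCert (n : ℕ) (w : EdgeSlot n → ℝ) : ℕ :=
  sInf {k : ℕ | ∃ A : Matrix (Fin k) (EdgeSlot n) ℝ,
    ∀ w' : EdgeSlot n → ℝ, (∀ e, 0 ≤ w' e) → A.mulVec w = A.mulVec w' →
      minCutVal n w' = minCutVal n w}

/-- The connectivity linear-query certificate complexity. -/
noncomputable def conCert (n : ℕ) (w : EdgeSlot n → ℝ) : ℕ :=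
  sInf {k : ℕ | ∃ A : Matrix (Fin k) (EdgeSlot n) ℝ,
    ∀ w' : EdgeSlot n → ℝ, (∀ e, 0 ≤ w' e) → A.mulVec w = A.mulVec w' →
      (0 < minCutVal n w' ↔ 0 < minCutVal n w)}

/-- Row indices of the universal cut-edge incidence matrix: nonempty sets of
vertices not containing vertex `1` (represented as `0 : Fin n`). -/
abbrev Shore (n : ℕ) [NeZero n] := {S : Finset (Fin n) // S.Nonempty ∧ (0 : Fin n) ∉ S}

/-- The universal cut-edge incidence matrix `M_n`. -/
noncomputable def Mn (n : ℕ) [NeZero n] : Matrix (Shore n) (EdgeSlot n) ℝ :=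
  fun S e => if (e.1 ∩ S.1).card = 1 then 1 else 0

/-- `τ`-cut-rank of a graph: the minimum rank of a matrix `X ≤ M_n` (entrywise)
with every entry of `Xw` at least `τ`. -/
noncomputable def cutRank (n : ℕ) [NeZero n] (τ : ℝ) (w : EdgeSlot n → ℝ) : ℕ :=
  sInf {r : ℕ | ∃ X : Matrix (Shore n) (EdgeSlot n) ℝ,
    (∀ S e, X S e ≤ Mn n S e) ∧ (∀ S, τ ≤ X.mulVec w S) ∧ X.rank = r}

/-- The weight vector of the `n`-cycle with unit weights. -/
noncomputable def cycleWeight (n : ℕ) [NeZero n] : EdgeSlot n → ℝ :=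
  fun e => if ∃ i : Fin n, e.1 = {i, i + 1} then 1 else 0


open Finset

variable {H : Type*} [AddCommGroup H] [Module ℝ H]
variable {κ : Type*} [Fintype κ] [DecidableEq κ]

lemma cone_caratheodory (v : κ → H) :
    ∀ N (c : κ → ℝ), ((univ.filter fun j => c j ≠ 0).card ≤ N) → (∀ j, 0 ≤ c j) →
    ∃ d : κ → ℝ, (∀ j, 0 ≤ d j) ∧ (∑ j, d j • v j = ∑ j, c j • v j) ∧
      LinearIndependent ℝ (fun j : {j // d j ≠ 0} => v j.1) := by
  intro N
  induction N with
  | zero =>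
      intro c hcard hc
      have hall : ∀ j, c j = 0 := by
        intro j; by_contra hj
        have hmem : j ∈ univ.filter fun j => c j ≠ 0 := by simp [hj]
        have := Finset.card_pos.mpr ⟨j, hmem⟩; omega
      have : IsEmpty {j // c j ≠ 0} := ⟨fun j => j.2 (hall j.1)⟩
      exact ⟨c, hc, rfl, linearIndependent_empty_type⟩
  | succ N ih =>
      intro c hcard hc
      by_cases hli : LinearIndependent ℝ (fun j : {j // c j ≠ 0} => v j.1)
      · exact ⟨c, hc, rfl, hli⟩
      obtain ⟨g, hg0, j₀', hj₀'⟩ := Fintype.not_linearIndependent_iff.mp hli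
      set e : κ → ℝ := fun j => if h : c j ≠ 0 then g ⟨j, h⟩ else 0 with he
      have hesupp : ∀ j, c j = 0 → e j = 0 := fun j hj => by simp [he, hj]
      have hesum : ∑ j, e j • v j = 0 := by
        have h1 : ∑ j ∈ univ.filter (fun j => c j ≠ 0), e j • v j = ∑ j : κ, e j • v j := by
          refine Finset.sum_filter_of_ne ?_
          intro j _ hne
          intro hcj
          exact hne (by simp [hesupp j hcj])
        have h2 : ∑ j ∈ univ.filter (fun j => c j ≠ 0), e j • v j
            = ∑ j : {j // c j ≠ 0}, e j.1 • v j.1 :=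
          Finset.sum_subtype _ (by simp) _
        have h3 : ∑ j : {j // c j ≠ 0}, e j.1 • v j.1 = 0 := by
          rw [← hg0]
          refine Finset.sum_congr rfl fun j _ => ?_
          simp [he, j.2]
        rw [← h1, h2, h3]
      have hene : e j₀'.1 ≠ 0 := by simpa [he, j₀'.2] using hj₀'
      obtain ⟨f, hfsum, hfsupp, j₀, hj₀pos⟩ :
          ∃ f : κ → ℝ, (∑ j, f j • v j = 0) ∧ (∀ j, c j = 0 → f j = 0) ∧ ∃ j, 0 < f j := by
        by_cases hp : ∃ j, 0 < e j
        · exact ⟨e, hesum, hesupp, hp⟩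
        · push_neg at hp
          refine ⟨-e, by simpa using hesum, fun j hj => by simp [hesupp j hj], j₀'.1, ?_⟩
          have := hp j₀'.1
          simp only [Pi.neg_apply]
          cases lt_or_eq_of_le this with
          | inl h => linarith
          | inr h => exact absurd h hene
      obtain ⟨j₁, hj₁T, hj₁min⟩ :=
        (univ.filter fun j => 0 < f j).exists_min_image (fun j => c j / f j)
          ⟨j₀, by simp [hj₀pos]⟩
      have hfj₁ : 0 < f j₁ := by simpa using hj₁T
      set t : ℝ := c j₁ / f j₁ with ht
      have ht0 : 0 ≤ t := div_nonneg (hc _) hfj₁.le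
      set d : κ → ℝ := fun j => c j - t * f j with hd
      have hd0 : ∀ j, 0 ≤ d j := by
        intro j
        by_cases hfj : 0 < f j
        · have : t ≤ c j / f j := hj₁min j (by simp [hfj])
          have := (le_div_iff₀ hfj).mp this
          simp only [hd]; linarith
        · push_neg at hfj
          have : t * f j ≤ 0 := mul_nonpos_of_nonneg_of_nonpos ht0 hfj
          have := hc j
          simp only [hd]; linarith
      have hdsum : ∑ j, d j • v j = ∑ j, c j • v j := by
        simp only [hd, sub_smul, Finset.sum_sub_distrib, mul_smul]
        rw [← Finset.smul_sum, hfsum, smul_zero, sub_zero]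
      have hdsupp : ∀ j, c j = 0 → d j = 0 := by
        intro j hj; simp [hd, hj, hfsupp j hj]
      have hcard' : (univ.filter fun j => d j ≠ 0).card ≤ N := by
        have hss : (univ.filter fun j => d j ≠ 0) ⊂ (univ.filter fun j => c j ≠ 0) := by
          constructor
          · intro j hj
            simp only [mem_filter, mem_univ, true_and] at hj ⊢
            intro hcj; exact hj (hdsupp j hcj)
          · intro hsub
            have hj₁c : c j₁ ≠ 0 := fun hcj => by
              have := hfsupp j₁ hcj; rw [this] at hfj₁; exact lt_irrefl 0 hfj₁
            have hj₁mem := hsub (by simp [hj₁c] : j₁ ∈ univ.filter fun j => c j ≠ 0)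
            simp only [mem_filter, mem_univ, true_and] at hj₁mem
            apply hj₁mem
            simp only [hd, ht]
            field_simp
            ring
        have := Finset.card_lt_card hss
        omega
      obtain ⟨d', h1, h2, h3⟩ := ih d hcard' hd0
      exact ⟨d', h1, h2.trans hdsum, h3⟩


set_option linter.unusedSectionVars false

variable {H : Type*} [NormedAddCommGroup H] [InnerProductSpace ℝ H] [FiniteDimensional ℝ H]
variable {κ : Type*} [Fintype κ] [DecidableEq κ]

/-- The linear map sending coefficients on `s` to the combination. -/
noncomputable def comboMap (v : κ → H) (s : Finset κ) : ((↥s : Type _) → ℝ) →ₗ[ℝ] H where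
  toFun c := ∑ j : ↥s, c j • v j.1
  map_add' c c' := by simp [add_smul, Finset.sum_add_distrib]
  map_smul' r c := by simp [Finset.smul_sum, mul_smul]

lemma isClosed_image_comboMap (v : κ → H) (s : Finset κ)
    (hli : LinearIndependent ℝ (fun j : ↥s => v j.1)) :
    IsClosed ((comboMap v s) '' {c | ∀ j, 0 ≤ c j}) := by
  have hker : LinearMap.ker (comboMap v s) = ⊥ := by
    rw [LinearMap.ker_eq_bot']
    intro c hc
    have := Fintype.linearIndependent_iff.mp hli c hc
    funext j; exact this j
  have hce := LinearMap.isClosedEmbedding_of_injective hker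
  apply hce.isClosedMap
  have : {c : (↥s : Type _) → ℝ | ∀ j, 0 ≤ c j} = ⋂ j, {c | 0 ≤ c j} := by
    ext c; simp [Set.mem_iInter]
  rw [this]
  exact isClosed_iInter fun j => isClosed_le continuous_const (continuous_apply j)

lemma isClosed_cone (v : κ → H) :
    IsClosed {x : H | ∃ c : κ → ℝ, (∀ j, 0 ≤ c j) ∧ x = ∑ j, c j • v j} := by
  have key : {x : H | ∃ c : κ → ℝ, (∀ j, 0 ≤ c j) ∧ x = ∑ j, c j • v j}
      = ⋃ s ∈ {s : Finset κ | LinearIndependent ℝ (fun j : ↥s => v j.1)},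
          (comboMap v s) '' {c | ∀ j, 0 ≤ c j} := by
    ext x
    simp only [Set.mem_setOf_eq, Set.mem_iUnion, Set.mem_image]
    constructor
    · rintro ⟨c, hc, rfl⟩
      obtain ⟨d, hd0, hdsum, hdli⟩ :=
        cone_caratheodory v (univ.filter fun j => c j ≠ 0).card c le_rfl hc
      set s : Finset κ := univ.filter fun j => d j ≠ 0 with hs
      have hmem : ∀ j : ↥s, d j.1 ≠ 0 := fun j => by
        have := j.2; simp only [hs, mem_filter] at this; exact this.2
      refine ⟨s, ?_, fun j => d j.1, fun j => hd0 _, ?_⟩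
      · -- linear independence transported along the equivalence of subtypes
        let e : (↥s : Type _) ≃ {j // d j ≠ 0} :=
          Equiv.subtypeEquivRight (fun j => by simp [hs])
        have hcomp : (fun j : ↥s => v j.1) = (fun j : {j // d j ≠ 0} => v j.1) ∘ e := by
          funext j; simp [e, Equiv.subtypeEquivRight]; rfl
        rw [hcomp]
        exact hdli.comp e e.injective
      · rw [← hdsum]
        show ∑ j : ↥s, d j.1 • v j.1 = _
        rw [← Finset.sum_filter_of_ne (s := univ) (p := fun j => d j ≠ 0)
          (f := fun j => d j • v j) (fun j _ hne hdj => hne (by simp [hdj]))]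
        exact (Finset.sum_subtype s (fun x => Iff.rfl) (fun j => d j • v j)).symm
    · rintro ⟨s, _, c, hc, rfl⟩
      refine ⟨fun j => if h : j ∈ s then c ⟨j, h⟩ else 0, ?_, ?_⟩
      · intro j; by_cases h : j ∈ s
        · simpa [h] using hc ⟨j, h⟩
        · simp [h]
      · show comboMap v s c = _
        rw [comboMap]
        simp only [LinearMap.coe_mk, AddHom.coe_mk]
        symm
        calc ∑ x : κ, (if h : x ∈ s then c ⟨x, h⟩ else 0) • v x
            = ∑ x ∈ s, (if h : x ∈ s then c ⟨x, h⟩ else 0) • v x :=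
              (Finset.sum_subset (Finset.subset_univ s) (fun x _ hx => by simp [hx])).symm
          _ = ∑ x ∈ s.attach, (if h : x.1 ∈ s then c ⟨x.1, h⟩ else 0) • v x.1 :=
              (Finset.sum_attach s _).symm
          _ = ∑ j : ↥s, c j • v j.1 := Finset.sum_congr rfl (fun j _ => by simp)
  rw [key]
  exact Set.Finite.isClosed_biUnion (Set.toFinite _)
    (fun s hs => isClosed_image_comboMap v s hs)
set_option linter.unusedSectionVars false
open scoped InnerProductSpace

/-- Farkas' lemma in a finite-dimensional real inner product space. -/
lemma farkas_inner (v : κ → H) (b : H)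
    (h : ∀ y : H, (∀ j, 0 ≤ ⟪v j, y⟫_ℝ) → 0 ≤ ⟪b, y⟫_ℝ) :
    ∃ c : κ → ℝ, (∀ j, 0 ≤ c j) ∧ b = ∑ j, c j • v j := by
  set C : ConvexCone ℝ H :=
    { carrier := {x : H | ∃ c : κ → ℝ, (∀ j, 0 ≤ c j) ∧ x = ∑ j, c j • v j}
      smul_mem' := by
        rintro t ht x ⟨c, hc, rfl⟩
        exact ⟨fun j => t * c j, fun j => mul_nonneg ht.le (hc j),
          by simp [Finset.smul_sum, mul_smul]⟩
      add_mem' := by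
        rintro x ⟨c, hc, rfl⟩ y ⟨c', hc', rfl⟩
        exact ⟨c + c', fun j => add_nonneg (hc j) (hc' j),
          by simp [add_smul, Finset.sum_add_distrib]⟩ } with hC
  by_contra hnot
  push_neg at hnot
  have hbC : b ∉ C := by
    rintro ⟨c, hc, rfl⟩
    exact hnot c hc rfl
  have hne : (C : Set H).Nonempty := ⟨0, ⟨0, fun j => le_rfl, by simp⟩⟩
  have hcl : IsClosed (C : Set H) := isClosed_cone v
  obtain ⟨y, hy1, hy2⟩ : ∃ y : H, (∀ x ∈ C, 0 ≤ ⟪x, y⟫_ℝ) ∧ ⟪y, b⟫_ℝ < 0 := by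
    let K : ProperCone ℝ H :=
      { carrier := (C : Set H)
        zero_mem' := ⟨0, fun j => le_rfl, by simp⟩
        add_mem' := fun ha hb => C.add_mem ha hb
        smul_mem' := by
          rintro t x ⟨c, hc, rfl⟩
          exact ⟨fun j => (t : ℝ) * c j, fun j => mul_nonneg t.2 (hc j),
            by simp [NNReal.smul_def, Finset.smul_sum, mul_smul]⟩
        isClosed' := hcl }
    obtain ⟨y, hy1, hy2⟩ := ProperCone.hyperplane_separation' K (x₀ := b) (by exact hbC)
    exact ⟨y, fun x hx => hy1 x hx, by rwa [real_inner_comm]⟩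
  have hv : ∀ j, 0 ≤ ⟪v j, y⟫_ℝ := by
    intro j
    refine hy1 (v j) ⟨fun i => if i = j then 1 else 0, fun i => by positivity, ?_⟩
    simp [ite_smul]
  have := h y hv
  rw [real_inner_comm] at hy2
  linarith
set_option linter.unusedSectionVars false

/-- Farkas' lemma for `ι → ℝ` with explicit dot products. -/
lemma farkas_pi {ι : Type*} [Fintype ι] {κ' : Type*} [Fintype κ'] [DecidableEq κ']
    (v : κ' → ι → ℝ) (b : ι → ℝ)
    (h : ∀ y : ι → ℝ, (∀ j, 0 ≤ ∑ i, v j i * y i) → 0 ≤ ∑ i, b i * y i) :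
    ∃ c : κ' → ℝ, (∀ j, 0 ≤ c j) ∧ ∀ i, b i = ∑ j, c j * v j i := by
  let V : κ' → EuclideanSpace ℝ ι := fun j => (WithLp.equiv 2 (ι → ℝ)).symm (v j)
  let B : EuclideanSpace ℝ ι := (WithLp.equiv 2 (ι → ℝ)).symm b
  have hinner : ∀ (x : ι → ℝ) (y : EuclideanSpace ℝ ι),
      ⟪(WithLp.equiv 2 (ι → ℝ)).symm x, y⟫_ℝ = ∑ i, x i * y i := by
    intro x y
    rw [PiLp.inner_apply]
    refine Finset.sum_congr rfl fun i _ => ?_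
    simp [RCLike.inner_apply]
    ring
  obtain ⟨c, hc, hsum⟩ := farkas_inner V B (by
    intro y hy
    rw [hinner]
    refine h (fun i => y i) ?_
    intro j
    have := hy j
    rwa [hinner] at this)
  refine ⟨c, hc, fun i => ?_⟩
  have h1 : B i = (∑ j, c j • V j) i := by rw [hsum]
  have h2 : B i = b i := rfl
  have h3 : (∑ j, c j • V j) i = ∑ j, c j * v j i := by
    have h4 : (∑ j, c j • V j) i = ∑ j, (c j • V j) i :=
      by rw [WithLp.ofLp_sum]; exact Finset.sum_apply i Finset.univ fun j => (c j • V j).ofLp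
    rw [h4]
    rfl
  rw [← h2, h1, h3]
set_option linter.unusedSectionVars false

lemma dual_exists {ι : Type*} [Fintype ι] [DecidableEq ι] {k : ℕ}
    (A : Matrix (Fin k) ι ℝ) (w m : ι → ℝ) (lam : ℝ) (hm : ∀ e, 0 ≤ m e)
    (h : ∀ w' : ι → ℝ, (∀ e, 0 ≤ w' e) → A.mulVec w' = A.mulVec w →
      lam ≤ ∑ e, m e * w' e) :
    ∃ y : Fin k → ℝ, (∀ e, ∑ j, y j * A j e ≤ m e) ∧
      lam ≤ ∑ j, y j * A.mulVec w j := by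
  classical
  set v : ((Fin k ⊕ Fin k) ⊕ (ι ⊕ Unit)) → (ι ⊕ Unit) → ℝ :=
    fun p => match p with
      | Sum.inl (Sum.inl j) => Sum.elim (fun e => A j e) (fun _ => A.mulVec w j)
      | Sum.inl (Sum.inr j) => -(Sum.elim (fun e => A j e) (fun _ => A.mulVec w j))
      | Sum.inr (Sum.inl e₀) => Sum.elim (fun e => if e = e₀ then (1:ℝ) else 0) 0
      | Sum.inr (Sum.inr _) => Sum.elim 0 (fun _ => (-1:ℝ)) with hv
  set b : (ι ⊕ Unit) → ℝ := Sum.elim m (fun _ => lam) with hb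
  obtain ⟨c, hc, hbc⟩ := farkas_pi v b (by
    intro y hy
    have heq : ∀ j : Fin k,
        ∑ e, A j e * y (Sum.inl e) = -(A.mulVec w j * y (Sum.inr default)) := by
      intro j
      have h1 := hy (Sum.inl (Sum.inl j))
      have h2 := hy (Sum.inl (Sum.inr j))
      simp only [hv, Fintype.sum_sum_type, Fintype.sum_unique, Sum.elim_inl, Sum.elim_inr,
        Pi.neg_apply, neg_mul, Finset.sum_neg_distrib] at h1 h2
      linarith
    have hupos : ∀ e, 0 ≤ y (Sum.inl e) := by
      intro e
      have h3 := hy (Sum.inr (Sum.inl e))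
      simpa only [hv, Fintype.sum_sum_type, Fintype.sum_unique, Sum.elim_inl, Sum.elim_inr,
        ite_mul, one_mul, zero_mul, Finset.sum_ite_eq, Finset.sum_ite_eq', Finset.mem_univ,
        if_true, Pi.zero_apply, add_zero, zero_add, Finset.sum_const_zero] using h3
    have hμneg : y (Sum.inr default) ≤ 0 := by
      have h4 := hy (Sum.inr (Sum.inr ()))
      simp only [hv, Fintype.sum_sum_type, Fintype.sum_unique, Sum.elim_inl, Sum.elim_inr,
        Pi.zero_apply, zero_mul, Finset.sum_const_zero, neg_mul, one_mul, zero_add,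
        neg_one_mul] at h4
      linarith
    have hgoal : (∑ i, b i * y i)
        = ∑ e, m e * y (Sum.inl e) + lam * y (Sum.inr default) := by
      simp only [hb, Fintype.sum_sum_type, Fintype.sum_unique, Sum.elim_inl, Sum.elim_inr]
    rw [hgoal]
    set μ : ℝ := y (Sum.inr default) with hμdef
    rcases eq_or_lt_of_le hμneg with hμ0 | hμlt
    · have hsum : 0 ≤ ∑ e, m e * y (Sum.inl e) :=
        Finset.sum_nonneg fun e _ => mul_nonneg (hm e) (hupos e)
      rw [hμ0]
      simpa using hsum
    · have hνpos : (0:ℝ) < -μ := by linarith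
      have hA : A.mulVec (fun e => (-μ)⁻¹ * y (Sum.inl e)) = A.mulVec w := by
        funext j
        show ∑ e, A j e * ((-μ)⁻¹ * y (Sum.inl e)) = A.mulVec w j
        have hexp : ∑ e, A j e * ((-μ)⁻¹ * y (Sum.inl e))
            = (-μ)⁻¹ * ∑ e, A j e * y (Sum.inl e) := by
          rw [Finset.mul_sum]; exact Finset.sum_congr rfl fun e _ => by ring
        rw [hexp, heq j]
        field_simp
        exact mul_div_cancel_left₀ _ hμlt.ne
      have h5 := h (fun e => (-μ)⁻¹ * y (Sum.inl e))
        (fun e => mul_nonneg (by positivity) (hupos e)) hA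
      have h6 : ∑ e, m e * ((-μ)⁻¹ * y (Sum.inl e))
          = (-μ)⁻¹ * ∑ e, m e * y (Sum.inl e) := by
        rw [Finset.mul_sum]; exact Finset.sum_congr rfl fun e _ => by ring
      rw [h6] at h5
      have h7 : (-μ) * lam ≤ ∑ e, m e * y (Sum.inl e) := by
        have := mul_le_mul_of_nonneg_left h5 hνpos.le
        rwa [← mul_assoc, mul_inv_cancel₀ hνpos.ne', one_mul] at this
      nlinarith)
  refine ⟨fun j => c (Sum.inl (Sum.inl j)) - c (Sum.inl (Sum.inr j)), ?_, ?_⟩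
  · intro e
    have h8 := hbc (Sum.inl e)
    simp only [hv, hb, Fintype.sum_sum_type, Fintype.sum_unique, Sum.elim_inl, Sum.elim_inr,
      Pi.neg_apply, mul_neg, mul_ite, mul_one, mul_zero, Finset.sum_ite_eq, Finset.mem_univ,
      if_true, add_zero, Finset.sum_neg_distrib, Pi.zero_apply, Finset.sum_const_zero] at h8
    have h9 : ∑ j, (c (Sum.inl (Sum.inl j)) - c (Sum.inl (Sum.inr j))) * A j e
        = ∑ j, c (Sum.inl (Sum.inl j)) * A j e - ∑ j, c (Sum.inl (Sum.inr j)) * A j e := by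
      simp only [sub_mul, Finset.sum_sub_distrib]
    rw [h9]
    have h10 := hc (Sum.inr (Sum.inl e))
    linarith
  · have h8 := hbc (Sum.inr ())
    simp only [hv, hb, Fintype.sum_sum_type, Fintype.sum_unique, Sum.elim_inl, Sum.elim_inr,
      Pi.neg_apply, mul_neg, mul_zero, Finset.sum_const_zero, zero_add, mul_one,
      Finset.sum_neg_distrib, Pi.zero_apply, add_zero, mul_neg_one] at h8
    have h9 : ∑ j, (c (Sum.inl (Sum.inl j)) - c (Sum.inl (Sum.inr j))) * A.mulVec w j
        = ∑ j, c (Sum.inl (Sum.inl j)) * A.mulVec w j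
          - ∑ j, c (Sum.inl (Sum.inr j)) * A.mulVec w j := by
      simp only [sub_mul, Finset.sum_sub_distrib]
    rw [h9]
    have h10 := hc (Sum.inr (Sum.inr ()))
    linarith

set_option linter.unusedSectionVars false
set_option maxHeartbeats 1000000

lemma cutWeight_eq_dot (n : ℕ) (w : EdgeSlot n → ℝ) (S : Finset (Fin n)) :
    cutWeight n w S = ∑ e : EdgeSlot n, (if (e.1 ∩ S).card = 1 then (1:ℝ) else 0) * w e := by
  unfold cutWeight
  exact Finset.sum_congr rfl fun e _ => by split <;> simp

lemma cutWeight_nonneg {n : ℕ} {w : EdgeSlot n → ℝ} (hw : ∀ e, 0 ≤ w e) (S : Finset (Fin n)) :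
    0 ≤ cutWeight n w S := by
  unfold cutWeight
  refine Finset.sum_nonneg fun e _ => ?_
  split
  · exact hw e
  · exact le_rfl

lemma bddBelow_cutSet {n : ℕ} {w : EdgeSlot n → ℝ} (hw : ∀ e, 0 ≤ w e) :
    BddBelow {x : ℝ | ∃ S : Finset (Fin n), S.Nonempty ∧ S ≠ Finset.univ ∧ cutWeight n w S = x} := by
  refine ⟨0, ?_⟩
  rintro x ⟨S, _, _, rfl⟩
  exact cutWeight_nonneg hw S

lemma minCutVal_le {n : ℕ} {w : EdgeSlot n → ℝ} (hw : ∀ e, 0 ≤ w e) {S : Finset (Fin n)}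
    (h1 : S.Nonempty) (h2 : S ≠ Finset.univ) : minCutVal n w ≤ cutWeight n w S :=
  csInf_le (bddBelow_cutSet hw) ⟨S, h1, h2, rfl⟩

lemma card_inter_compl {n : ℕ} (e : EdgeSlot n) (S : Finset (Fin n)) :
    (e.1 ∩ Sᶜ).card = 1 ↔ (e.1 ∩ S).card = 1 := by
  have h2 : e.1.card = 2 := e.2
  have hsd : e.1 ∩ Sᶜ = e.1 \ S := by
    ext x; simp [Finset.mem_sdiff, Finset.mem_compl]
  have hadd : (e.1 \ S).card + (e.1 ∩ S).card = 2 := by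
    rw [Finset.card_sdiff_add_card_inter, h2]
  rw [hsd]
  omega

lemma cutWeight_compl {n : ℕ} (w : EdgeSlot n → ℝ) (S : Finset (Fin n)) :
    cutWeight n w Sᶜ = cutWeight n w S := by
  unfold cutWeight
  exact Finset.sum_congr rfl fun e _ => by rw [if_congr (card_inter_compl e S) rfl rfl]

lemma exists_shore (n : ℕ) [NeZero n] (S : Finset (Fin n)) (h1 : S.Nonempty)
    (h2 : S ≠ Finset.univ) :
    ∃ T : Finset (Fin n), T.Nonempty ∧ (0 : Fin n) ∉ T ∧
      ∀ w : EdgeSlot n → ℝ, cutWeight n w T = cutWeight n w S := by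
  by_cases h0 : (0 : Fin n) ∈ S
  · refine ⟨Sᶜ, ?_, by simp [h0], fun w => cutWeight_compl w S⟩
    rw [Finset.nonempty_iff_ne_empty]
    intro hc
    exact h2 (by rwa [Finset.compl_eq_empty_iff] at hc)
  · exact ⟨S, h1, h0, fun w => rfl⟩

lemma shore_ne_univ {n : ℕ} [NeZero n] (S : Shore n) : S.1 ≠ Finset.univ := by
  intro h
  exact S.2.2 (h ▸ Finset.mem_univ (0 : Fin n))

lemma singleton_ne_univ {n : ℕ} [NeZero n] (hn : 2 ≤ n) :
    ({0} : Finset (Fin n)) ≠ Finset.univ := by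
  intro h
  have := congrArg Finset.card h
  simp [Finset.card_univ] at this
  omega

lemma exists_min_shore {n : ℕ} [NeZero n] (hn : 2 ≤ n) (w : EdgeSlot n → ℝ) :
    ∃ S : Finset (Fin n), S.Nonempty ∧ S ≠ Finset.univ ∧ cutWeight n w S = minCutVal n w := by
  set Q : Set ℝ :=
    {x : ℝ | ∃ S : Finset (Fin n), S.Nonempty ∧ S ≠ Finset.univ ∧ cutWeight n w S = x} with hQ
  have hfin : Q.Finite := by
    have hsub : Q ⊆ (fun S => cutWeight n w S) '' Set.univ := by
      rintro x ⟨S, _, _, rfl⟩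
      exact ⟨S, Set.mem_univ S, rfl⟩
    exact (Set.finite_univ.image _).subset hsub
  have hne : Q.Nonempty :=
    ⟨cutWeight n w {0}, {0}, Finset.singleton_nonempty _, singleton_ne_univ hn, rfl⟩
  obtain ⟨S, h1, h2, h3⟩ := hne.csInf_mem hfin
  exact ⟨S, h1, h2, h3⟩

lemma mulVec_eq {m' ι : Type*} [Fintype ι] (A : Matrix m' ι ℝ) (v : ι → ℝ) (j : m') :
    A.mulVec v j = ∑ e, A j e * v e := rfl
lemma minCutVal_one (w : EdgeSlot 1 → ℝ) : minCutVal 1 w = 0 := by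
  unfold minCutVal
  have hset : {x : ℝ | ∃ S : Finset (Fin 1), S.Nonempty ∧ S ≠ Finset.univ ∧
      cutWeight 1 w S = x} = ∅ := by
    ext x
    simp only [Set.mem_empty_iff_false, iff_false, Set.mem_setOf_eq]
    rintro ⟨S, h1, h2, -⟩
    refine h2 (Finset.eq_univ_iff_forall.mpr fun i => ?_)
    obtain ⟨a, ha⟩ := h1
    rwa [Subsingleton.elim i a]
  rw [hset, Real.sInf_empty]

/-- `λ(G)-cut-rank(G) ≤ mincut-cert(G) ≤ λ(G)-cut-rank(G) + 1`. -/
theorem mincutCert_between_cutRank (n : ℕ) [NeZero n] (w : EdgeSlot n → ℝ)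
    (hw : ∀ e, 0 ≤ w e) :
    cutRank n (minCutVal n w) w ≤ mincutCert n w ∧
      mincutCert n w ≤ cutRank n (minCutVal n w) w + 1 := by
  classical
  constructor
  · -- cutRank ≤ mincutCert
    have hAne : {k : ℕ | ∃ A : Matrix (Fin k) (EdgeSlot n) ℝ,
        ∀ w' : EdgeSlot n → ℝ, (∀ e, 0 ≤ w' e) → A.mulVec w = A.mulVec w' →
          minCutVal n w' = minCutVal n w}.Nonempty := by
      set q := Fintype.equivFin (EdgeSlot n) with hq
      refine ⟨Fintype.card (EdgeSlot n),
        Matrix.of (fun j e => if q e = j then (1:ℝ) else 0), fun w' hw' hA => ?_⟩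
      have hweq : w = w' := by
        funext e
        have := congrFun hA (q e)
        simp only [Matrix.mulVec, dotProduct, Matrix.of_apply, ite_mul, one_mul,
          zero_mul] at this
        simp only [q.apply_eq_iff_eq, Finset.sum_ite_eq', Finset.mem_univ, if_true] at this
        exact this
      rw [hweq]
    obtain ⟨A, hA⟩ : ∃ A : Matrix (Fin (mincutCert n w)) (EdgeSlot n) ℝ,
        ∀ w' : EdgeSlot n → ℝ, (∀ e, 0 ≤ w' e) → A.mulVec w = A.mulVec w' →
          minCutVal n w' = minCutVal n w := Nat.sInf_mem hAne
    have hy : ∀ S : Shore n, ∃ y : Fin (mincutCert n w) → ℝ,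
        (∀ e, ∑ j, y j * A j e ≤ Mn n S e) ∧
          minCutVal n w ≤ ∑ j, y j * A.mulVec w j := by
      intro S
      refine dual_exists A w (fun e => Mn n S e) (minCutVal n w)
        (fun e => by unfold Mn; split <;> norm_num) ?_
      intro w' hw' hAw'
      have hcert := hA w' hw' hAw'.symm
      have : ∑ e, Mn n S e * w' e = cutWeight n w' S.1 := by
        rw [cutWeight_eq_dot]; rfl
      rw [this, ← hcert]
      exact minCutVal_le hw' S.2.1 (shore_ne_univ S)
    choose y hy1 hy2 using hy
    set X : Matrix (Shore n) (EdgeSlot n) ℝ := Matrix.of fun S e => ∑ j, y S j * A j e with hX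
    have hrank : X.rank ≤ mincutCert n w := by
      have hXm : X = (Matrix.of fun S j => y S j) * A := by
        ext S e
        simp [hX, Matrix.mul_apply]
      rw [hXm]
      refine le_trans (Matrix.rank_mul_le_right _ _) ?_
      simpa using Matrix.rank_le_card_height A
    refine le_trans (Nat.sInf_le ⟨X, fun S e => hy1 S e, fun S => ?_, rfl⟩) hrank
    have hXw : X.mulVec w S = ∑ j, y S j * A.mulVec w j := by
      rw [mulVec_eq]
      calc ∑ e, X S e * w e
          = ∑ e, ∑ j, y S j * A j e * w e := by
            refine Finset.sum_congr rfl fun e _ => ?_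
            rw [hX]; simp [Finset.sum_mul]
        _ = ∑ j, ∑ e, y S j * A j e * w e := Finset.sum_comm
        _ = ∑ j, y S j * A.mulVec w j := by
            refine Finset.sum_congr rfl fun j _ => ?_
            rw [mulVec_eq, Finset.mul_sum]
            exact Finset.sum_congr rfl fun e _ => by ring
    rw [hXw]
    exact hy2 S
  · -- mincutCert ≤ cutRank + 1
    rcases Nat.lt_or_ge n 2 with hn | hn
    · have hn1 : n = 1 := by have := Nat.pos_of_ne_zero (NeZero.ne n); omega
      subst hn1
      have h0 : mincutCert 1 w ≤ 0 :=
        Nat.sInf_le ⟨Matrix.of (fun (i : Fin 0) (e : EdgeSlot 1) => (0:ℝ)),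
          fun w' _ _ => by rw [minCutVal_one, minCutVal_one]⟩
      omega
    · set lam := minCutVal n w with hlam
      have hMnw : ∀ S : Shore n, lam ≤ (Mn n).mulVec w S := by
        intro S
        have hMn : (Mn n).mulVec w S = cutWeight n w S.1 := by
          rw [mulVec_eq, cutWeight_eq_dot]; rfl
        rw [hMn]
        exact minCutVal_le hw S.2.1 (shore_ne_univ S)
      have hne : {r : ℕ | ∃ X : Matrix (Shore n) (EdgeSlot n) ℝ,
          (∀ S e, X S e ≤ Mn n S e) ∧ (∀ S, lam ≤ X.mulVec w S) ∧ X.rank = r}.Nonempty :=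
        ⟨(Mn n).rank, Mn n, fun S e => le_rfl, hMnw, rfl⟩
      obtain ⟨X, hXle, hXw, hXrank⟩ : ∃ X : Matrix (Shore n) (EdgeSlot n) ℝ,
          (∀ S e, X S e ≤ Mn n S e) ∧ (∀ S, lam ≤ X.mulVec w S) ∧
            X.rank = cutRank n lam w := Nat.sInf_mem hne
      obtain ⟨S₁, hS₁ne, hS₁u, hS₁val⟩ := exists_min_shore hn w
      set r := cutRank n lam w with hr
      set W : Submodule ℝ (EdgeSlot n → ℝ) := LinearMap.range (Xᵀ).mulVecLin with hW
      have hfr : Module.finrank ℝ ↥W = r := by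
        rw [show Module.finrank ℝ ↥W = Xᵀ.rank from rfl, Matrix.rank_transpose, hXrank]
      set bb := (Module.finBasis ℝ ↥W).reindex (finCongr hfr) with hbb
      set A : Matrix (Fin (r+1)) (EdgeSlot n) ℝ :=
        Matrix.of (Fin.cons (fun e => if (e.1 ∩ S₁).card = 1 then (1:ℝ) else 0)
          (fun i e => ((bb i : EdgeSlot n → ℝ)) e)) with hA
      refine Nat.sInf_le ⟨A, fun w' hw' hAw => ?_⟩
      have h0 : cutWeight n w S₁ = cutWeight n w' S₁ := by
        have h0' := congrFun hAw 0
        rw [mulVec_eq, mulVec_eq] at h0'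
        simp only [hA, Matrix.of_apply, Fin.cons_zero] at h0'
        rw [cutWeight_eq_dot, cutWeight_eq_dot]
        exact h0'
      have hrow : ∀ i : Fin r,
          ∑ e, (bb i : EdgeSlot n → ℝ) e * w e = ∑ e, (bb i : EdgeSlot n → ℝ) e * w' e := by
        intro i
        have h1' := congrFun hAw i.succ
        rw [mulVec_eq, mulVec_eq] at h1'
        simpa only [hA, Matrix.of_apply, Fin.cons_succ] using h1'
      set φ : (EdgeSlot n → ℝ) →ₗ[ℝ] ℝ :=
        { toFun := fun v => ∑ e, v e * w e - ∑ e, v e * w' e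
          map_add' := by
            intro a b
            simp only [Pi.add_apply, add_mul, Finset.sum_add_distrib]
            ring
          map_smul' := by
            intro c a
            simp only [Pi.smul_apply, smul_eq_mul, RingHom.id_apply, mul_assoc,
              ← Finset.mul_sum]
            ring } with hφ
      have hφW : ∀ v ∈ W, φ v = 0 := by
        have hcomp : φ.comp W.subtype = 0 := by
          apply Module.Basis.ext bb
          intro i
          simp only [LinearMap.comp_apply, Submodule.coe_subtype, LinearMap.zero_apply, hφ,
            LinearMap.coe_mk, AddHom.coe_mk]
          rw [sub_eq_zero]
          exact hrow i
        intro v hv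
        have := LinearMap.congr_fun hcomp ⟨v, hv⟩
        simpa using this
      have hXrow : ∀ S : Shore n, (fun e => X S e) ∈ W := by
        intro S
        refine ⟨Pi.single S 1, ?_⟩
        funext e
        simp [Matrix.mulVecLin_apply, mulVec_eq, Matrix.transpose_apply, Pi.single_apply,
          mul_ite, mul_one, mul_zero, Finset.sum_ite_eq']
      have hXdot : ∀ S : Shore n, ∑ e, X S e * w' e = ∑ e, X S e * w e := by
        intro S
        have := hφW _ (hXrow S)
        simp only [hφ, LinearMap.coe_mk, AddHom.coe_mk] at this
        linarith [this]
      have hlow : ∀ T : Finset (Fin n), T.Nonempty → T ≠ Finset.univ →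
          lam ≤ cutWeight n w' T := by
        intro T h1 h2
        obtain ⟨T', h1', h0', hcw⟩ := exists_shore n T h1 h2
        rw [← hcw w']
        have hcalc : lam ≤ cutWeight n w' T' := by
          calc lam ≤ X.mulVec w ⟨T', h1', h0'⟩ := hXw _
            _ = ∑ e, X ⟨T', h1', h0'⟩ e * w e := mulVec_eq _ _ _
            _ = ∑ e, X ⟨T', h1', h0'⟩ e * w' e := (hXdot _).symm
            _ ≤ ∑ e, Mn n ⟨T', h1', h0'⟩ e * w' e :=
                Finset.sum_le_sum fun e _ =>
                  mul_le_mul_of_nonneg_right (hXle _ e) (hw' e)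
            _ = cutWeight n w' T' := by rw [cutWeight_eq_dot]; rfl
        exact hcalc
      have hup : minCutVal n w' ≤ lam :=
        csInf_le (bddBelow_cutSet hw') ⟨S₁, hS₁ne, hS₁u, h0.symm.trans hS₁val⟩
      have hlo : lam ≤ minCutVal n w' := by
        refine le_csInf ⟨cutWeight n w' S₁, S₁, hS₁ne, hS₁u, rfl⟩ ?_
        rintro x ⟨T, h1, h2, rfl⟩
        exact hlow T h1 h2
      rw [← hlam]
      exact le_antisymm hup hlo
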